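/- There is no strategy using the two-qubit maximally entangled state and 1 classical bit that wins the DMH game: for any POVMs {E_c^{(m)}}_{c∈{0,1}} (m = 1,...,4) on ℂ² and any POVMs {N_z^{(c)}}_{z=1}^4 (c = 0,1) on ℂ², if the strategy s(m,z) = (1/2) ∑_{c} Tr[E_c^{(m)} (N_z^{(c)})ᵀ] vanishes on all DMH-forbidden entries, then s(3,1) ≤ s(1,1), hence the expected payoff (1/4)(s(3,1) − s(1,1)) is ≤ 0. -/

import Mathlib

open scoped ComplexOrder
def dmhForbidden : Finset (Fin 4 × Fin 4) :=
  {(0,3), (1,0), (1,2), (2,2), (2,3), (3,0), (3,1)}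

namespace DMHAux

open Matrix

variable {n : Type*} [Fintype n] [DecidableEq n]

lemma trace_conjTranspose_mul_self_nonneg (A : Matrix n n ℂ) : 0 ≤ (Aᴴ * A).trace := by
  rw [Matrix.trace]
  apply Finset.sum_nonneg
  intro j _
  have : (Aᴴ * A).diag j = dotProduct (star fun i => A i j) (fun i => A i j) := by
    simp [Matrix.diag_apply, Matrix.mul_apply, Matrix.conjTranspose_apply, dotProduct]
  rw [this]
  exact dotProduct_star_self_nonneg _

lemma eq_zero_of_trace_conjTranspose_mul_self (A : Matrix n n ℂ)
    (h : (Aᴴ * A).trace = 0) : A = 0 := by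
  rw [Matrix.trace] at h
  have hterm : ∀ j ∈ Finset.univ, (0:ℂ) ≤ (Aᴴ * A).diag j := by
    intro j _
    have : (Aᴴ * A).diag j = dotProduct (star fun i => A i j) (fun i => A i j) := by
      simp [Matrix.diag_apply, Matrix.mul_apply, Matrix.conjTranspose_apply, dotProduct]
    rw [this]
    exact dotProduct_star_self_nonneg _
  have hz := (Finset.sum_eq_zero_iff_of_nonneg hterm).mp h
  ext i j
  have hj := hz j (Finset.mem_univ j)
  have : dotProduct (star fun i => A i j) (fun i => A i j) = 0 := by
    rw [← hj]
    simp [Matrix.diag_apply, Matrix.mul_apply, Matrix.conjTranspose_apply, dotProduct]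
  have := dotProduct_star_self_eq_zero.mp this
  simpa using congr_fun this i

open scoped MatrixOrder in
noncomputable def _root_.Matrix.PosSemidef.sqrt {P : Matrix n n ℂ} (_hP : P.PosSemidef) :
    Matrix n n ℂ := CFC.sqrt P

open scoped MatrixOrder in
lemma _root_.Matrix.PosSemidef.posSemidef_sqrt {P : Matrix n n ℂ} (hP : P.PosSemidef) :
    hP.sqrt.PosSemidef := (CFC.sqrt_nonneg P).posSemidef

open scoped MatrixOrder in
lemma _root_.Matrix.PosSemidef.sqrt_mul_self {P : Matrix n n ℂ} (hP : P.PosSemidef) :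
    hP.sqrt * hP.sqrt = P := CFC.sqrt_mul_sqrt_self P hP.nonneg

lemma trace_mul_nonneg {P Q : Matrix n n ℂ} (hP : P.PosSemidef) (hQ : Q.PosSemidef) :
    0 ≤ (P * Q).trace := by
  have hS := hP.posSemidef_sqrt.isHermitian
  have hR := hQ.posSemidef_sqrt.isHermitian
  have key : ((hP.sqrt * hQ.sqrt)ᴴ * (hP.sqrt * hQ.sqrt)).trace = (P * Q).trace := by
    rw [conjTranspose_mul, hS.eq, hR.eq]
    calc (hQ.sqrt * hP.sqrt * (hP.sqrt * hQ.sqrt)).trace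
        = (hQ.sqrt * (hP.sqrt * hP.sqrt * hQ.sqrt)).trace := by rw [Matrix.mul_assoc, Matrix.mul_assoc]
      _ = ((hP.sqrt * hP.sqrt * hQ.sqrt) * hQ.sqrt).trace := by rw [Matrix.trace_mul_comm]
      _ = (P * Q).trace := by rw [hP.sqrt_mul_self, Matrix.mul_assoc, hQ.sqrt_mul_self]
  rw [← key]
  exact trace_conjTranspose_mul_self_nonneg _

lemma mul_eq_zero_of_trace_eq_zero {P Q : Matrix n n ℂ} (hP : P.PosSemidef) (hQ : Q.PosSemidef)
    (h : (P * Q).trace = 0) : P * Q = 0 := by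
  have hS := hP.posSemidef_sqrt.isHermitian
  have hR := hQ.posSemidef_sqrt.isHermitian
  have key : ((hP.sqrt * hQ.sqrt)ᴴ * (hP.sqrt * hQ.sqrt)).trace = (P * Q).trace := by
    rw [conjTranspose_mul, hS.eq, hR.eq]
    calc (hQ.sqrt * hP.sqrt * (hP.sqrt * hQ.sqrt)).trace
        = (hQ.sqrt * (hP.sqrt * hP.sqrt * hQ.sqrt)).trace := by rw [Matrix.mul_assoc, Matrix.mul_assoc]
      _ = ((hP.sqrt * hP.sqrt * hQ.sqrt) * hQ.sqrt).trace := by rw [Matrix.trace_mul_comm]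
      _ = (P * Q).trace := by rw [hP.sqrt_mul_self, Matrix.mul_assoc, hQ.sqrt_mul_self]
  have hA : hP.sqrt * hQ.sqrt = 0 :=
    eq_zero_of_trace_conjTranspose_mul_self _ (by rw [key, h])
  calc P * Q = (hP.sqrt * hP.sqrt) * (hQ.sqrt * hQ.sqrt) := by
        rw [hP.sqrt_mul_self, hQ.sqrt_mul_self]
    _ = hP.sqrt * ((hP.sqrt * hQ.sqrt) * hQ.sqrt) := by
        simp only [Matrix.mul_assoc]
    _ = 0 := by rw [hA, Matrix.zero_mul, Matrix.mul_zero]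

/-- The key algebraic chain: in context `c` (unprimed) versus context `1-c` (primed). -/
lemma key_chain (a' b b' e e' M0 M0' M1' M2' M3' : Matrix n n ℂ)
    (hb' : b'.IsHermitian) (he' : e'.IsHermitian)
    (hM0' : M0'.IsHermitian) (hM1' : M1'.IsHermitian) (hM2' : M2'.IsHermitian)
    (hbe : b + b' = 1) (hee : e + e' = 1)
    (h1 : b * M0 = 0) (h2 : e * M0 = 0)
    (h3 : b' * M0' = 0) (h4 : b' * M2' = 0) (h5 : e' * M1' = 0)
    (hsum : M0' + M1' + M2' + M3' = 1)
    (h6 : a' * M3' = 0) : a' * M0 = 0 := by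
  have hb'M0 : b' * M0 = M0 := by
    have : b' = 1 - b := by rw [← hbe]; abel
    rw [this, Matrix.sub_mul, Matrix.one_mul, h1, sub_zero]
  have he'M0 : e' * M0 = M0 := by
    have : e' = 1 - e := by rw [← hee]; abel
    rw [this, Matrix.sub_mul, Matrix.one_mul, h2, sub_zero]
  have hM0'b' : M0' * b' = 0 := by
    have := congrArg Matrix.conjTranspose h3
    rwa [conjTranspose_mul, hb'.eq, hM0'.eq, conjTranspose_zero] at this
  have hM2'b' : M2' * b' = 0 := by
    have := congrArg Matrix.conjTranspose h4
    rwa [conjTranspose_mul, hb'.eq, hM2'.eq, conjTranspose_zero] at this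
  have hM1'e' : M1' * e' = 0 := by
    have := congrArg Matrix.conjTranspose h5
    rwa [conjTranspose_mul, he'.eq, hM1'.eq, conjTranspose_zero] at this
  have hM0'M0 : M0' * M0 = 0 := by
    rw [← hb'M0, ← Matrix.mul_assoc, hM0'b', Matrix.zero_mul]
  have hM2'M0 : M2' * M0 = 0 := by
    rw [← hb'M0, ← Matrix.mul_assoc, hM2'b', Matrix.zero_mul]
  have hM1'M0 : M1' * M0 = 0 := by
    rw [← he'M0, ← Matrix.mul_assoc, hM1'e', Matrix.zero_mul]
  have hM3'M0 : M3' * M0 = M0 := by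
    have : M3' = 1 - M0' - M1' - M2' := by rw [← hsum]; abel
    rw [this, Matrix.sub_mul, Matrix.sub_mul, Matrix.sub_mul, Matrix.one_mul,
      hM0'M0, hM1'M0, hM2'M0, sub_zero, sub_zero, sub_zero]
  rw [← hM3'M0, ← Matrix.mul_assoc, h6, Matrix.zero_mul]

end DMHAux

/-- no strategy using the two-qubit maximally entangled state and
1 classical bit wins the DMH game. Alice's POVMs E^(m) = {E^(m)_0, E^(m)_1} and
Bob's POVMs N^(c) = {N^(c)_1,…,N^(c)_4} induce the strategy
s(m,z) = (1/2)∑_c Tr[E^(m)_c (N^(c)_z)ᵀ]; if it vanishes on all forbidden entries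
then s(3,1) ≤ s(1,1), so the expected payoff (1/4)(s(3,1) − s(1,1)) is ≤ 0. -/
theorem phiPlus_cannot_win_dmh
    (E : Fin 4 → Fin 2 → Matrix (Fin 2) (Fin 2) ℂ)
    (N : Fin 2 → Fin 4 → Matrix (Fin 2) (Fin 2) ℂ)
    (hEpos : ∀ m c, (E m c).PosSemidef)
    (hEsum : ∀ m, ∑ c, E m c = 1)
    (hNpos : ∀ c z, (N c z).PosSemidef)
    (hNsum : ∀ c, ∑ z, N c z = 1)
    (s : Fin 4 → Fin 4 → ℝ)
    (hs : ∀ m z, s m z = ((1/2 : ℂ) * ∑ c, (E m c * (N c z).transpose).trace).re)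
    (hforb : ∀ p ∈ dmhForbidden, s p.1 p.2 = 0) :
    s 2 0 ≤ s 0 0 ∧ (1/4 : ℝ) * (s 2 0 - s 0 0) ≤ 0 := by
  have hM : ∀ c z, ((N c z).transpose).PosSemidef := fun c z => (hNpos c z).transpose
  -- forbidden entries kill each product
  have hz : ∀ m z, (m, z) ∈ dmhForbidden →
      (E m 0 * (N 0 z).transpose = 0 ∧ E m 1 * (N 1 z).transpose = 0) := by
    intro m z hmem
    have h := hforb (m, z) hmem
    rw [hs] at h
    rw [Fin.sum_univ_two] at h
    have h0 := DMHAux.trace_mul_nonneg (hEpos m 0) (hM 0 z)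
    have h1 := DMHAux.trace_mul_nonneg (hEpos m 1) (hM 1 z)
    obtain ⟨h0re, h0im⟩ := Complex.nonneg_iff.mp h0
    obtain ⟨h1re, h1im⟩ := Complex.nonneg_iff.mp h1
    have hre : (E m 0 * (N 0 z).transpose).trace.re
        + (E m 1 * (N 1 z).transpose).trace.re = 0 := by
      simp only [Complex.mul_re, Complex.add_re, Complex.add_im, Complex.one_re,
        Complex.one_im, Complex.div_re, Complex.div_im] at h
      norm_num at h
      linarith
    have ht0 : (E m 0 * (N 0 z).transpose).trace = 0 := by
      apply Complex.ext
      · simp; linarith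
      · simp [← h0im]
    have ht1 : (E m 1 * (N 1 z).transpose).trace = 0 := by
      apply Complex.ext
      · simp; linarith
      · simp [← h1im]
    exact ⟨DMHAux.mul_eq_zero_of_trace_eq_zero (hEpos m 0) (hM 0 z) ht0,
      DMHAux.mul_eq_zero_of_trace_eq_zero (hEpos m 1) (hM 1 z) ht1⟩
  have mem1 : ((1:Fin 4), (0:Fin 4)) ∈ dmhForbidden := by decide
  have mem2 : ((1:Fin 4), (2:Fin 4)) ∈ dmhForbidden := by decide
  have mem3 : ((3:Fin 4), (0:Fin 4)) ∈ dmhForbidden := by decide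
  have mem4 : ((3:Fin 4), (1:Fin 4)) ∈ dmhForbidden := by decide
  have mem5 : ((0:Fin 4), (3:Fin 4)) ∈ dmhForbidden := by decide
  have hEsum' : ∀ m, E m 0 + E m 1 = 1 := by
    intro m; have := hEsum m; rwa [Fin.sum_univ_two] at this
  have hNsum' : ∀ c, (N c 0).transpose + (N c 1).transpose + (N c 2).transpose
      + (N c 3).transpose = 1 := by
    intro c
    have := congrArg Matrix.transpose (hNsum c)
    rw [Fin.sum_univ_four] at this
    simpa [Matrix.transpose_add] using this
  -- E 0 1 * (N 0 0)ᵀ = 0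
  have hA0 : E 0 1 * (N 0 0).transpose = 0 := by
    apply DMHAux.key_chain (E 0 1) (E 1 0) (E 1 1) (E 3 0) (E 3 1)
      ((N 0 0).transpose) ((N 1 0).transpose) ((N 1 1).transpose)
      ((N 1 2).transpose) ((N 1 3).transpose)
      (hEpos 1 1).isHermitian (hEpos 3 1).isHermitian
      (hM 1 0).isHermitian (hM 1 1).isHermitian (hM 1 2).isHermitian
      (hEsum' 1) (hEsum' 3)
      (hz 1 0 mem1).1 (hz 3 0 mem3).1
      (hz 1 0 mem1).2 (hz 1 2 mem2).2 (hz 3 1 mem4).2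
      (hNsum' 1)
      (hz 0 3 mem5).2
  -- E 0 0 * (N 1 0)ᵀ = 0
  have hA1 : E 0 0 * (N 1 0).transpose = 0 := by
    apply DMHAux.key_chain (E 0 0) (E 1 1) (E 1 0) (E 3 1) (E 3 0)
      ((N 1 0).transpose) ((N 0 0).transpose) ((N 0 1).transpose)
      ((N 0 2).transpose) ((N 0 3).transpose)
      (hEpos 1 0).isHermitian (hEpos 3 0).isHermitian
      (hM 0 0).isHermitian (hM 0 1).isHermitian (hM 0 2).isHermitian
      (by rw [add_comm]; exact hEsum' 1) (by rw [add_comm]; exact hEsum' 3)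
      (hz 1 0 mem1).2 (hz 3 0 mem3).2
      (hz 1 0 mem1).1 (hz 1 2 mem2).1 (hz 3 1 mem4).1
      (hNsum' 0)
      (hz 0 3 mem5).1
  -- rewrite the products in rows 0 and 2
  have e00 : E 0 0 * (N 0 0).transpose = (N 0 0).transpose := by
    have h : E 0 0 = 1 - E 0 1 := by rw [← hEsum' 0]; abel
    rw [h, Matrix.sub_mul, Matrix.one_mul, hA0, sub_zero]
  have e01 : E 0 1 * (N 1 0).transpose = (N 1 0).transpose := by
    have h : E 0 1 = 1 - E 0 0 := by rw [← hEsum' 0]; abel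
    rw [h, Matrix.sub_mul, Matrix.one_mul, hA1, sub_zero]
  have d00 : E 2 0 * (N 0 0).transpose
      = (N 0 0).transpose - E 2 1 * (N 0 0).transpose := by
    have h : E 2 0 = 1 - E 2 1 := by rw [← hEsum' 2]; abel
    rw [h, Matrix.sub_mul, Matrix.one_mul]
  have d01 : E 2 1 * (N 1 0).transpose
      = (N 1 0).transpose - E 2 0 * (N 1 0).transpose := by
    have h : E 2 1 = 1 - E 2 0 := by rw [← hEsum' 2]; abel
    rw [h, Matrix.sub_mul, Matrix.one_mul]
  have hX := DMHAux.trace_mul_nonneg (hEpos 2 1) (hM 0 0)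
  have hY := DMHAux.trace_mul_nonneg (hEpos 2 0) (hM 1 0)
  obtain ⟨hXre, hXim⟩ := Complex.nonneg_iff.mp hX
  obtain ⟨hYre, hYim⟩ := Complex.nonneg_iff.mp hY
  have hmain : s 2 0 ≤ s 0 0 := by
    rw [hs 2 0, hs 0 0, Fin.sum_univ_two, Fin.sum_univ_two, e00, e01, d00, d01,
      Matrix.trace_sub, Matrix.trace_sub]
    set u := ((N 0 0).transpose).trace
    set v := ((N 1 0).transpose).trace
    set x := (E 2 1 * (N 0 0).transpose).trace
    set y := (E 2 0 * (N 1 0).transpose).trace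
    have hrw : (1/2 : ℂ) * (u - x + (v - y)) = (1/2)*(u + v) - (1/2)*(x + y) := by ring
    rw [hrw, Complex.sub_re]
    have : 0 ≤ ((1/2 : ℂ) * (x + y)).re := by
      simp only [Complex.mul_re, Complex.add_re, Complex.add_im]
      norm_num
      linarith
    linarith
  exact ⟨hmain, by nlinarith⟩
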